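/- For an odd number n of independent voters, each voting correctly with the same fixed probability p with 1/2 < p < 1, the probability that a strict majority votes correctly is strictly increasing in n (over odd n) and tends to 1 as n tends to infinity. -/

import Mathlib

open Filter

/-- Probability that a strict majority of `n` independent voters, each correct
with probability `p`, vote correctly. -/
noncomputable def Pmaj (n : ℕ) (p : ℝ) : ℝ :=
  ∑ i ∈ Finset.Ioc (n / 2) n, (n.choose i : ℝ) * p ^ i * (1 - p) ^ (n - i)

/-- lower tail partial sum -/
noncomputable def G (p : ℝ) (n m : ℕ) : ℝ :=
  ∑ i ∈ Finset.range m, (n.choose i : ℝ) * p ^ i * (1 - p) ^ (n - i)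

lemma G_succ (p : ℝ) (n m : ℕ) :
    G p n (m+1) = G p n m + (n.choose m : ℝ) * p ^ m * (1 - p) ^ (n - m) :=
  Finset.sum_range_succ _ _

lemma G_conv (p : ℝ) (n m : ℕ) (h : m + 1 ≤ n) :
    G p (n+2) (m+2) =
      (1-p)^2 * G p n (m+2) + 2*p*(1-p) * G p n (m+1) + p^2 * G p n m := by
  induction m with
  | zero =>
    obtain ⟨j, rfl⟩ : ∃ j, n = j + 1 := ⟨n - 1, by omega⟩
    simp [G, Finset.sum_range_succ]
    ring
  | succ m ih =>
    have ih' := ih (by omega)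
    rw [show m + 1 + 2 = (m + 2) + 1 from rfl, G_succ p (n+2) (m+2), ih',
      G_succ p n (m+2), show m + 1 + 1 = (m + 1) + 1 from rfl, G_succ p n (m+1),
      G_succ p n m]
    have e1 : n + 2 - (m + 2) = (n - (m + 2)) + 2 := by omega
    have e2 : n - (m + 1) = (n - (m + 2)) + 1 := by omega
    have e3 : n - m = (n - (m + 2)) + 2 := by omega
    have hP : ((n+2).choose (m+2) : ℝ) =
        (n.choose m : ℝ) + 2 * (n.choose (m+1) : ℝ) + (n.choose (m+2) : ℝ) := by
      rw [show n + 2 = (n+1) + 1 from rfl, Nat.choose_succ_succ (n+1) (m+1),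
        Nat.choose_succ_succ n m, Nat.choose_succ_succ n (m+1)]
      push_cast; ring
    rw [e1, e2, e3, hP]
    ring

lemma G_total (p : ℝ) (n : ℕ) : G p n (n+1) = 1 := by
  have h : G p n (n+1) = (p + (1-p))^n := by
    rw [add_pow, G]
    exact Finset.sum_congr rfl fun i _ => by ring
  rw [h]; norm_num

lemma Pmaj_eq (p : ℝ) (k : ℕ) : Pmaj (2*k+1) p = 1 - G p (2*k+1) (k+1) := by
  have hd : (2*k+1)/2 = k := by omega
  have hset : Finset.Ioc ((2*k+1)/2) (2*k+1) = Finset.Ico (k+1) (2*k+2) := by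
    ext i; simp only [Finset.mem_Ioc, Finset.mem_Ico]; omega
  have hsum : G p (2*k+1) (k+1) +
      ∑ i ∈ Finset.Ico (k+1) (2*k+2), ((2*k+1).choose i : ℝ) * p ^ i * (1-p) ^ (2*k+1-i)
      = G p (2*k+1) (2*k+2) := by
    rw [G, G, Finset.range_eq_Ico, Finset.range_eq_Ico]
    exact Finset.sum_Ico_consecutive (fun i => ((2*k+1).choose i : ℝ) * p ^ i * (1-p) ^ (2*k+1-i)) (by omega : 0 ≤ k+1) (by omega : k+1 ≤ 2*k+2)
  have ht : G p (2*k+1) (2*k+2) = 1 := G_total p (2*k+1)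
  rw [Pmaj, hset]
  linarith [hsum, ht]

lemma G_step (p : ℝ) (k : ℕ) :
    G p (2*k+3) (k+2) = G p (2*k+1) (k+1)
      - ((2*k+1).choose k : ℝ) * p^(k+1) * (1-p)^(k+1) * (2*p - 1) := by
  have h := G_conv p (2*k+1) k (by omega)
  rw [show 2*k+1+2 = 2*k+3 from rfl] at h
  rw [h, G_succ p (2*k+1) (k+1), G_succ p (2*k+1) k]
  have e1 : 2*k+1 - (k+1) = k := by omega
  have e2 : 2*k+1 - k = k+1 := by omega
  have hc : ((2*k+1).choose (k+1) : ℝ) = ((2*k+1).choose k : ℝ) := by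
    congr 1
    rw [show k + 1 = 2*k+1 - k by omega]
    exact Nat.choose_symm (by omega)
  rw [e1, e2, hc]
  ring

lemma tail_le (p : ℝ) (hp : 1/2 < p) (hp1 : p < 1) (k : ℕ) :
    G p (2*k+1) (k+1) ≤ 2*(1-p) * (4*p*(1-p))^k := by
  have hp0 : (0:ℝ) < p := by linarith
  have hq0 : (0:ℝ) < 1 - p := by linarith
  have hb : ∀ i ∈ Finset.range (k+1),
      ((2*k+1).choose i : ℝ) * p ^ i * (1-p) ^ (2*k+1-i)
        ≤ ((2*k+1).choose i : ℝ) * ((1-p) * (p*(1-p))^k) := by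
    intro i hi
    rw [Finset.mem_range] at hi
    have hik : i ≤ k := by omega
    have key : p ^ i * (1-p) ^ (2*k+1-i) ≤ (1-p) * (p*(1-p))^k := by
      rw [show 2*k+1-i = 2*(k-i)+i+1 by omega]
      have h1 : (1-p)^(2*(k-i)+i+1) = ((1-p)^2)^(k-i) * (1-p)^i * (1-p) := by
        rw [pow_add, pow_add, pow_mul, pow_one]
      rw [h1]
      have h2 : ((1-p)^2)^(k-i) ≤ (p*(1-p))^(k-i) :=
        pow_le_pow_left₀ (by positivity) (by nlinarith) _
      calc p^i * (((1-p)^2)^(k-i) * (1-p)^i * (1-p))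
          ≤ p^i * ((p*(1-p))^(k-i) * (1-p)^i * (1-p)) := by
            apply mul_le_mul_of_nonneg_left _ (by positivity)
            apply mul_le_mul_of_nonneg_right _ (by positivity)
            exact mul_le_mul_of_nonneg_right h2 (by positivity)
        _ = (1-p) * (p*(1-p))^k := by
            rw [show (p*(1-p))^k = (p*(1-p))^(k-i) * (p*(1-p))^i by
              rw [← pow_add]; congr 1; omega, mul_pow p (1-p) (k-i), mul_pow p (1-p) i]
            ring
    calc ((2*k+1).choose i : ℝ) * p ^ i * (1-p) ^ (2*k+1-i)
        = ((2*k+1).choose i : ℝ) * (p ^ i * (1-p) ^ (2*k+1-i)) := by ring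
      _ ≤ ((2*k+1).choose i : ℝ) * ((1-p) * (p*(1-p))^k) :=
          mul_le_mul_of_nonneg_left key (Nat.cast_nonneg _)
  have h2 : G p (2*k+1) (k+1)
      ≤ (∑ i ∈ Finset.range (k+1), ((2*k+1).choose i : ℝ)) * ((1-p) * (p*(1-p))^k) := by
    rw [G, Finset.sum_mul]
    exact Finset.sum_le_sum hb
  have h3 : (∑ i ∈ Finset.range (k+1), ((2*k+1).choose i : ℝ)) ≤ (2:ℝ)^(2*k+1) := by
    have hnat : (∑ i ∈ Finset.range (k+1), (2*k+1).choose i) ≤ 2^(2*k+1) := by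
      calc (∑ i ∈ Finset.range (k+1), (2*k+1).choose i)
          ≤ ∑ i ∈ Finset.range (2*k+2), (2*k+1).choose i :=
            Finset.sum_le_sum_of_subset (by intro x; simp only [Finset.mem_range]; omega)
        _ = 2^(2*k+1) := Nat.sum_range_choose _
    calc (∑ i ∈ Finset.range (k+1), ((2*k+1).choose i : ℝ))
        = ((∑ i ∈ Finset.range (k+1), (2*k+1).choose i : ℕ) : ℝ) := by push_cast; rfl
      _ ≤ (2:ℝ)^(2*k+1) := by exact_mod_cast hnat
  have h4 : (2:ℝ)^(2*k+1) * ((1-p) * (p*(1-p))^k) = 2*(1-p) * (4*p*(1-p))^k := by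
    rw [show (4:ℝ)*p*(1-p) = 4*(p*(1-p)) by ring, mul_pow (4:ℝ) (p*(1-p)) k,
      mul_pow p (1-p) k, pow_succ, pow_mul, show ((2:ℝ)^2)^k = 4^k by norm_num]
    ring
  have h5 : (0:ℝ) ≤ (1-p) * (p*(1-p))^k := by positivity
  calc G p (2*k+1) (k+1)
      ≤ (∑ i ∈ Finset.range (k+1), ((2*k+1).choose i : ℝ)) * ((1-p) * (p*(1-p))^k) := h2
    _ ≤ (2:ℝ)^(2*k+1) * ((1-p) * (p*(1-p))^k) := mul_le_mul_of_nonneg_right h3 h5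
    _ = 2*(1-p) * (4*p*(1-p))^k := h4

/-- Condorcet's classical jury theorem: for fixed `1/2 < p < 1`, the majority
probability is strictly increasing over odd `n` and tends to `1`. -/
theorem condorcet_jury (p : ℝ) (hp : 1 / 2 < p) (hp1 : p < 1) :
    (∀ n : ℕ, Odd n → Pmaj n p < Pmaj (n + 2) p) ∧
    Tendsto (fun k : ℕ => Pmaj (2 * k + 1) p) atTop (nhds 1) := by
  have hp0 : (0:ℝ) < p := by linarith
  have hq0 : (0:ℝ) < 1 - p := by linarith
  constructor
  · intro n hn
    obtain ⟨k, hk⟩ := hn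
    have hn2 : n = 2*k+1 := by omega
    subst hn2
    rw [Pmaj_eq p k, show 2*k+1+2 = 2*(k+1)+1 by ring, Pmaj_eq p (k+1),
      show 2*(k+1)+1 = 2*k+3 by ring, G_step p k]
    have hc : (0:ℝ) < ((2*k+1).choose k : ℝ) := by
      exact_mod_cast Nat.choose_pos (by omega)
    have : (0:ℝ) < ((2*k+1).choose k : ℝ) * p^(k+1) * (1-p)^(k+1) * (2*p-1) := by
      have : (0:ℝ) < 2*p - 1 := by linarith
      positivity
    linarith
  · have hr0 : (0:ℝ) ≤ 4*p*(1-p) := by positivity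
    have hr1 : 4*p*(1-p) < 1 := by nlinarith
    have hpow : Tendsto (fun k : ℕ => (4*p*(1-p))^k) atTop (nhds 0) :=
      tendsto_pow_atTop_nhds_zero_of_lt_one hr0 hr1
    have hbnd : Tendsto (fun k : ℕ => 2*(1-p)*(4*p*(1-p))^k) atTop (nhds 0) := by
      simpa using hpow.const_mul (2*(1-p))
    have hGnn : ∀ k : ℕ, (0:ℝ) ≤ G p (2*k+1) (k+1) := fun k =>
      Finset.sum_nonneg fun i _ => by positivity
    have hG : Tendsto (fun k : ℕ => G p (2*k+1) (k+1)) atTop (nhds 0) :=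
      tendsto_of_tendsto_of_tendsto_of_le_of_le tendsto_const_nhds hbnd
        hGnn (fun k => tail_le p hp hp1 k)
    have heq : (fun k : ℕ => Pmaj (2*k+1) p) = fun k : ℕ => 1 - G p (2*k+1) (k+1) :=
      funext (Pmaj_eq p)
    rw [heq]
    simpa using tendsto_const_nhds.sub hG
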